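/- Let T ≥ 3, d ≥ 1, and run the fixed-share forecaster with time-varying parameters η_t = sqrt(ln(dt)/t) for t ≥ 3 (with η_0 = η_1 = η_2 = η_3) and α_t = 1/t. Then for all loss sequences ℓ_t ∈ [0,1]^d, max over intervals [r,s] ⊆ [1,T] of (Σ_{t=r}^s p_t·ℓ_t - min_{q∈Δ_d} Σ_{t=r}^s q·ℓ_t) ≤ sqrt(2T ln(dT)) + sqrt(3 ln(3d)). -/

import Mathlib

open Real Finset

lemma tele (f : ℕ → ℝ) : ∀ r s : ℕ, r ≤ s →
    ∑ t ∈ Finset.Icc r s, (f (t+1) - f t) = f (s+1) - f r := by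
  intro r s hrs
  induction s, hrs using Nat.le_induction with
  | base => simp
  | succ n hn ih => rw [Finset.sum_Icc_succ_top (by omega), ih]; ring

lemma hoeffN (q : ℝ) (h0 : 0 ≤ q) (h1 : q ≤ 1) (s : ℝ) : 0 < 1 - q + q * Real.exp s := by
  rcases le_or_gt (Real.exp s) 1 with h | h
  · nlinarith [Real.exp_pos s]
  · nlinarith

lemma div_sqrt_div_le (a u c : ℝ) (hu : 0 < u) (ha0 : 0 ≤ a) (hau : a ≤ u) (hc : 0 < c) :
    a / Real.sqrt (u/c) ≤ Real.sqrt (c*u) := by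
  have h1 : Real.sqrt (u/c) = Real.sqrt u / Real.sqrt c := Real.sqrt_div hu.le c
  have hsu : 0 < Real.sqrt u := Real.sqrt_pos.mpr hu
  have hsc : 0 < Real.sqrt c := Real.sqrt_pos.mpr hc
  have hpos : 0 < Real.sqrt (u/c) := by rw [h1]; positivity
  calc a / Real.sqrt (u/c) ≤ u / Real.sqrt (u/c) := by gcongr
    _ = Real.sqrt (c*u) := by
        rw [h1, Real.sqrt_mul hc.le, div_div_eq_mul_div, div_eq_iff hsu.ne', mul_assoc,
          Real.mul_self_sqrt hu.le]
        ring

lemma hoeffding (q : ℝ) (h0 : 0 ≤ q) (h1 : q ≤ 1) (s : ℝ) :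
    Real.log (1 - q + q * Real.exp s) ≤ q * s + s^2/8 := by
  set g : ℝ → ℝ := fun x => q * x + x^2/8 - Real.log (1 - q + q * Real.exp x) with hgdef
  set g' : ℝ → ℝ := fun x => q + x/4 - q * Real.exp x / (1 - q + q * Real.exp x) with hg'def
  have hN := hoeffN q h0 h1
  have hg : ∀ x : ℝ, HasDerivAt g (g' x) x := by
    intro x
    have h1' : HasDerivAt (fun y : ℝ => 1 - q + q * Real.exp y) (q * Real.exp x) x :=
      ((Real.hasDerivAt_exp x).const_mul q).const_add (1 - q)
    have h2 : HasDerivAt (fun y : ℝ => Real.log (1 - q + q * Real.exp y))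
        (q * Real.exp x / (1 - q + q * Real.exp x)) x := h1'.log (hN x).ne'
    have h3 : HasDerivAt (fun y : ℝ => q * y + y^2/8) (q + x/4) x := by
      have := ((hasDerivAt_id x).const_mul q).add ((hasDerivAt_pow 2 x).div_const 8)
      refine this.congr_deriv ?_
      ring
    exact h3.sub h2
  have hg' : ∀ x : ℝ, HasDerivAt g'
      (1/4 - (q * Real.exp x / (1 - q + q * Real.exp x))
        * (1 - q * Real.exp x / (1 - q + q * Real.exp x))) x := by
    intro x
    have h1' : HasDerivAt (fun y : ℝ => 1 - q + q * Real.exp y) (q * Real.exp x) x :=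
      ((Real.hasDerivAt_exp x).const_mul q).const_add (1 - q)
    have h2 : HasDerivAt (fun y : ℝ => q * Real.exp y) (q * Real.exp x) x :=
      (Real.hasDerivAt_exp x).const_mul q
    have h4 := h2.div h1' (hN x).ne'
    have h3 : HasDerivAt (fun y : ℝ => q + y/4) (1/4) x := by
      simpa using ((hasDerivAt_id x).div_const 4).const_add q
    have := h3.sub h4
    refine this.congr_deriv ?_
    have := (hN x).ne'
    field_simp
  have hmono : Monotone g' := by
    apply monotone_of_deriv_nonneg
    · exact fun x => (hg' x).differentiableAt
    · intro x
      rw [(hg' x).deriv]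
      set u := q * Real.exp x / (1 - q + q * Real.exp x)
      nlinarith [sq_nonneg (u - 1/2)]
  have hg'0 : g' 0 = 0 := by
    simp [hg'def]
  have hg0 : g 0 = 0 := by
    simp [hgdef]
  have key : ∀ x : ℝ, 0 ≤ g x := by
    intro x
    rcases lt_trichotomy x 0 with hx | hx | hx
    · obtain ⟨c, hc, hceq⟩ := exists_hasDerivAt_eq_slope g g' hx
        (fun y _ => (hg y).continuousAt.continuousWithinAt) (fun y _ => hg y)
      have hc0 : g' c ≤ 0 := hg'0 ▸ hmono hc.2.le
      have : (g 0 - g x) / (0 - x) = g' c := hceq.symm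
      rw [hg0] at this
      have hxne : (0:ℝ) - x > 0 := by linarith
      have := (div_le_iff₀ hxne).mp (this ▸ hc0)
      nlinarith
    · simp [hx, hg0]
    · obtain ⟨c, hc, hceq⟩ := exists_hasDerivAt_eq_slope g g' hx
        (fun y _ => (hg y).continuousAt.continuousWithinAt) (fun y _ => hg y)
      have hc0 : 0 ≤ g' c := hg'0 ▸ hmono hc.1.le
      have : (g x - g 0) / (x - 0) = g' c := hceq.symm
      rw [hg0] at this
      have h5 : 0 ≤ (g x - 0) / (x - 0) := this ▸ hc0
      rcases div_nonneg_iff.mp h5 with ⟨h6, _⟩ | ⟨_, h6⟩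
      · linarith
      · linarith
  have := key s
  simp only [hgdef] at this
  linarith


lemma jensen_rpow (d : ℕ) (hd : 1 ≤ d) (β : ℝ) (hβ0 : 0 < β) (hβ1 : β ≤ 1)
    (x : Fin d → ℝ) (hx : ∀ i, 0 ≤ x i) :
    ∑ i, x i ^ β ≤ (d:ℝ) ^ (1 - β) * (∑ i, x i) ^ β := by
  have hd0 : (0:ℝ) < d := by exact_mod_cast hd
  have h := (Real.concaveOn_rpow hβ0.le hβ1).le_map_sum (t := Finset.univ)
      (w := fun _ : Fin d => 1/(d:ℝ)) (p := x)
      (fun i _ => by positivity)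
      (by simp [Finset.card_univ]; field_simp)
      (fun i _ => Set.mem_Ici.mpr (hx i))
  simp only [smul_eq_mul] at h
  rw [← Finset.mul_sum, ← Finset.mul_sum] at h
  rw [Real.mul_rpow (by positivity) (Finset.sum_nonneg fun i _ => hx i)] at h
  have hkey : (d:ℝ) * ((1/(d:ℝ)) ^ β) = (d:ℝ) ^ (1 - β) := by
    rw [one_div, ← Real.rpow_neg_one, ← Real.rpow_mul hd0.le,
      show (1:ℝ) - β = 1 + (-1*β) by ring, Real.rpow_add hd0, Real.rpow_one]
  calc ∑ i, x i ^ β = (d:ℝ) * ((1/(d:ℝ)) * ∑ i, x i ^ β) := by field_simp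
    _ ≤ (d:ℝ) * ((1/(d:ℝ)) ^ β * (∑ i, x i) ^ β) := by
        apply mul_le_mul_of_nonneg_left h hd0.le
    _ = (d:ℝ) ^ (1 - β) * (∑ i, x i) ^ β := by rw [← mul_assoc, hkey]


set_option maxHeartbeats 16000000 in
theorem stmt19 (d T : ℕ) (hd : 1 ≤ d) (hT : 3 ≤ T)
    (η α : ℕ → ℝ)
    (hηdef : ∀ t, 3 ≤ t → η t = Real.sqrt (Real.log (d * t) / t))
    (hη0 : η 0 = η 3) (hη1 : η 1 = η 3) (hη2 : η 2 = η 3)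
    (hαdef : ∀ t, 1 ≤ t → α t = 1 / (t : ℝ))
    (ℓ p v : ℕ → Fin d → ℝ)
    (hℓ : ∀ t ∈ Finset.Icc 1 T, ∀ j, ℓ t j ∈ Set.Icc (0 : ℝ) 1)
    (hp1 : ∀ j, p 1 j = 1 / d)
    (hv : ∀ t ∈ Finset.Icc 1 T, ∀ j,
      v (t + 1) j = p t j ^ (η t / η (t - 1)) * Real.exp (-η t * ℓ t j)
        / ∑ i, p t i ^ (η t / η (t - 1)) * Real.exp (-η t * ℓ t i))
    (hshare : ∀ t ∈ Finset.Icc 1 T, ∀ j,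
      p (t + 1) j = α t / d + (1 - α t) * v (t + 1) j) :
    ∀ r s : ℕ, 1 ≤ r → r ≤ s → s ≤ T →
      ∀ q : Fin d → ℝ, (∀ i, 0 ≤ q i) → (∑ i, q i = 1) →
        ∑ t ∈ Finset.Icc r s, (∑ i, p t i * ℓ t i)
            - ∑ t ∈ Finset.Icc r s, (∑ i, q i * ℓ t i)
          ≤ Real.sqrt (2 * T * Real.log (d * T)) + Real.sqrt (3 * Real.log (3 * d)) := by
  classical
  haveI : Nonempty (Fin d) := ⟨⟨0, hd⟩⟩
  have hd0 : (0:ℝ) < d := by exact_mod_cast hd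
  have hdR1 : (1:ℝ) ≤ d := by exact_mod_cast hd
  have hTR : (3:ℝ) ≤ T := by exact_mod_cast hT
  have hlogd0 : 0 ≤ Real.log d := Real.log_nonneg hdR1
  have he3 : Real.exp 1 < 3 := by
    have := Real.exp_one_lt_d9; linarith
  have hb1 : 1 < Real.log (3 * (d:ℝ)) := by
    calc (1:ℝ) = Real.log (Real.exp 1) := (Real.log_exp 1).symm
    _ < Real.log (3*(d:ℝ)) := Real.log_lt_log (Real.exp_pos 1) (by nlinarith)
  have hlogdt : ∀ t : ℕ, 3 ≤ t → 1 < Real.log ((d:ℝ)*t) := by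
    intro t ht
    have htR : (3:ℝ) ≤ t := by exact_mod_cast ht
    calc (1:ℝ) = Real.log (Real.exp 1) := (Real.log_exp 1).symm
    _ < Real.log ((d:ℝ)*t) := Real.log_lt_log (Real.exp_pos 1) (by nlinarith)
  have hbL : Real.log (3 * (d:ℝ)) ≤ Real.log ((d:ℝ)*T) :=
    Real.log_le_log (by positivity) (by nlinarith)
  have hL1 : 1 < Real.log ((d:ℝ)*T) := lt_of_lt_of_le hb1 hbL
  -- η facts
  have hη3eq : η 3 = Real.sqrt (Real.log (3*(d:ℝ)) / 3) := by
    rw [hηdef 3 le_rfl]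
    norm_num [mul_comm]
  have hη3pos : 0 < η 3 := by
    rw [hη3eq]; exact Real.sqrt_pos.mpr (by positivity)
  have hηpos : ∀ t, 0 < η t := by
    intro t
    rcases lt_or_ge t 3 with h | h
    · interval_cases t
      · rw [hη0]; exact hη3pos
      · rw [hη1]; exact hη3pos
      · rw [hη2]; exact hη3pos
    · rw [hηdef t h]
      have := hlogdt t h
      have ht0 : (0:ℝ) < t := by exact_mod_cast Nat.lt_of_lt_of_le (by norm_num) h
      exact Real.sqrt_pos.mpr (by positivity)
  have hηstep : ∀ t, η (t+1) ≤ η t := by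
    intro t
    rcases lt_or_ge t 3 with h | h
    · interval_cases t
      · rw [hη0, hη1]
      · rw [hη1, hη2]
      · rw [hη2]
    · rw [hηdef (t+1) (by omega), hηdef t h]
      apply Real.sqrt_le_sqrt
      have htR : (3:ℝ) ≤ (t:ℝ) := by exact_mod_cast h
      have ht0 : (0:ℝ) < t := by linarith
      have ht10 : (0:ℝ) < (t:ℝ)+1 := by linarith
      have hcast : ((t+1:ℕ):ℝ) = (t:ℝ)+1 := by push_cast; ring
      rw [hcast, div_le_div_iff₀ ht10 ht0]
      have hsplit : Real.log ((d:ℝ)*((t:ℝ)+1)) = Real.log ((d:ℝ)*t) + Real.log (((t:ℝ)+1)/t) := by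
        rw [← Real.log_mul (by positivity) (by positivity)]
        congr 1; field_simp
      have hq : (0:ℝ) < ((t:ℝ)+1)/t := by positivity
      have hlb : Real.log (((t:ℝ)+1)/(t:ℝ)) ≤ 1/(t:ℝ) := by
        have h1 := Real.log_le_sub_one_of_pos hq
        have h2 : ((t:ℝ)+1)/t - 1 = 1/t := by field_simp; ring
        linarith
      have h1 : 1 ≤ Real.log ((d:ℝ)*t) := (hlogdt t h).le
      have hlog0 : 0 ≤ Real.log (((t:ℝ)+1)/(t:ℝ)) :=
        Real.log_nonneg (by rw [le_div_iff₀ ht0]; linarith)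
      rw [hsplit]
      have : (t:ℝ) * Real.log (((t:ℝ)+1)/(t:ℝ)) ≤ 1 := by
        calc (t:ℝ) * Real.log (((t:ℝ)+1)/(t:ℝ)) ≤ (t:ℝ) * (1/t) := by gcongr
        _ = 1 := by field_simp
      nlinarith
  have hηanti : ∀ a c : ℕ, a ≤ c → η c ≤ η a := by
    intro a c hac
    induction c, hac using Nat.le_induction with
    | base => exact le_rfl
    | succ n hn ih => exact (hηstep n).trans ih
  have hηinv : ∀ a c : ℕ, a ≤ c → 1/η a ≤ 1/η c := fun a c hac =>
    one_div_le_one_div_of_le (hηpos c) (hηanti a c hac)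
  -- structural facts about p
  have hstruct : ∀ t, 1 ≤ t → t ≤ T + 1 → (∀ i, 0 < p t i) ∧ (∑ i, p t i = 1) := by
    intro t ht1
    induction t, ht1 using Nat.le_induction with
    | base =>
      intro _
      refine ⟨fun i => by rw [hp1]; positivity, ?_⟩
      simp only [hp1, Finset.sum_const, Finset.card_univ, Fintype.card_fin, nsmul_eq_mul]
      field_simp
    | succ n hn ih =>
      intro hn1
      obtain ⟨hpos, hsum⟩ := ih (by omega)
      have hnIcc : n ∈ Finset.Icc 1 T := Finset.mem_Icc.mpr ⟨hn, by omega⟩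
      have hZpos : 0 < ∑ i, p n i ^ (η n / η (n-1)) * Real.exp (-η n * ℓ n i) :=
        Finset.sum_pos (fun i _ =>
          mul_pos (Real.rpow_pos_of_pos (hpos i) _) (Real.exp_pos _)) Finset.univ_nonempty
      have hvpos : ∀ i, 0 < v (n+1) i := by
        intro i
        rw [hv n hnIcc i]
        exact div_pos (mul_pos (Real.rpow_pos_of_pos (hpos i) _) (Real.exp_pos _)) hZpos
      have hvsum : ∑ i, v (n+1) i = 1 := by
        rw [Finset.sum_congr rfl (fun i _ => hv n hnIcc i), ← Finset.sum_div]
        exact div_self hZpos.ne'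
      have hα : α n = 1/(n:ℝ) := hαdef n hn
      have hn0 : (0:ℝ) < n := by exact_mod_cast hn
      have hα0 : 0 < α n := by rw [hα]; positivity
      have hα1 : α n ≤ 1 := by
        rw [hα]; rw [div_le_one hn0]; exact_mod_cast hn
      constructor
      · intro i
        rw [hshare n hnIcc i]
        have h1 : 0 < α n / d := div_pos hα0 hd0
        have h2 : 0 ≤ (1 - α n) * v (n+1) i := mul_nonneg (by linarith) (hvpos i).le
        linarith
      · rw [Finset.sum_congr rfl (fun i _ => hshare n hnIcc i), Finset.sum_add_distrib,
          Finset.sum_const, Finset.card_univ, Fintype.card_fin, nsmul_eq_mul, ← Finset.mul_sum,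
          hvsum]
        field_simp
        ring
  have hple1 : ∀ t, 1 ≤ t → t ≤ T+1 → ∀ i, p t i ≤ 1 := by
    intro t h1 h2 i
    obtain ⟨hpos, hsum⟩ := hstruct t h1 h2
    calc p t i ≤ ∑ k, p t k :=
      Finset.single_le_sum (fun k _ => (hpos k).le) (Finset.mem_univ i)
    _ = 1 := hsum
  have hZposall : ∀ t, 1 ≤ t → t ≤ T →
      0 < ∑ i, p t i ^ (η t / η (t-1)) * Real.exp (-η t * ℓ t i) := by
    intro t h1 h2
    exact Finset.sum_pos (fun i _ =>
      mul_pos (Real.rpow_pos_of_pos ((hstruct t h1 (by omega)).1 i) _) (Real.exp_pos _))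
      Finset.univ_nonempty
  have hvposall : ∀ t, 1 ≤ t → t ≤ T → ∀ i, 0 < v (t+1) i := by
    intro t h1 h2 i
    rw [hv t (Finset.mem_Icc.mpr ⟨h1, h2⟩) i]
    exact div_pos (mul_pos (Real.rpow_pos_of_pos ((hstruct t h1 (by omega)).1 i) _)
      (Real.exp_pos _)) (hZposall t h1 h2)
  have hvle1 : ∀ t, 1 ≤ t → t ≤ T → ∀ i, v (t+1) i ≤ 1 := by
    intro t h1 h2 i
    rw [hv t (Finset.mem_Icc.mpr ⟨h1, h2⟩) i, div_le_one (hZposall t h1 h2)]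
    exact Finset.single_le_sum (f := fun i => p t i ^ (η t / η (t-1)) * Real.exp (-η t * ℓ t i))
      (fun k _ => (mul_pos (Real.rpow_pos_of_pos ((hstruct t h1 (by omega)).1 k) _)
        (Real.exp_pos _)).le) (Finset.mem_univ i)
  have hplow : ∀ t, 1 ≤ t → t ≤ T → ∀ i, 1/((t:ℝ)*d) ≤ p (t+1) i := by
    intro t h1 h2 i
    rw [hshare t (Finset.mem_Icc.mpr ⟨h1, h2⟩) i, hαdef t h1]
    have hn0 : (0:ℝ) < t := by exact_mod_cast h1
    have hα1 : (1:ℝ)/t ≤ 1 := by rw [div_le_one hn0]; exact_mod_cast h1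
    have h3 : 0 ≤ (1 - 1/(t:ℝ)) * v (t+1) i :=
      mul_nonneg (by linarith) (hvposall t h1 h2 i).le
    have : (1:ℝ)/t/d = 1/((t:ℝ)*d) := by field_simp
    linarith [this.symm.le]
  intro r s hr hrs hsT q hq0 hq1
  -- reduce to best expert
  obtain ⟨j, -, hjmin⟩ := Finset.exists_min_image Finset.univ
    (fun i => ∑ t ∈ Finset.Icc r s, ℓ t i) Finset.univ_nonempty
  have hj : ∑ t ∈ Finset.Icc r s, ℓ t j ≤ ∑ t ∈ Finset.Icc r s, ∑ i, q i * ℓ t i := by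
    calc ∑ t ∈ Finset.Icc r s, ℓ t j = (∑ i, q i) * ∑ t ∈ Finset.Icc r s, ℓ t j := by
          rw [hq1, one_mul]
    _ = ∑ i, q i * ∑ t ∈ Finset.Icc r s, ℓ t j := Finset.sum_mul _ _ _
    _ ≤ ∑ i, q i * ∑ t ∈ Finset.Icc r s, ℓ t i :=
        Finset.sum_le_sum (fun i _ =>
          mul_le_mul_of_nonneg_left (hjmin i (Finset.mem_univ i)) (hq0 i))
    _ = ∑ i, ∑ t ∈ Finset.Icc r s, q i * ℓ t i := by
        apply Finset.sum_congr rfl; intro i _; rw [Finset.mul_sum]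
    _ = ∑ t ∈ Finset.Icc r s, ∑ i, q i * ℓ t i := Finset.sum_comm
  rw [← Finset.sum_sub_distrib]
  have hgoalred : ∀ B : ℝ,
      (∑ t ∈ Finset.Icc r s, ((∑ i, p t i * ℓ t i) - ℓ t j) ≤ B) →
      ∑ t ∈ Finset.Icc r s, ((∑ i, p t i * ℓ t i) - (∑ i, q i * ℓ t i)) ≤ B := by
    intro B hB
    rw [Finset.sum_sub_distrib] at hB ⊢
    linarith
  apply hgoalred
  -- core per-step inequality
  have hstep : ∀ t, 1 ≤ t → t ≤ T →
      (∑ i, p t i * ℓ t i) - ℓ t j ≤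
      η (t-1)/8 + (1/η t - 1/η (t-1)) * Real.log d
        + (1/η t) * Real.log (v (t+1) j) - (1/η (t-1)) * Real.log (p t j) := by
    intro t ht1 htT
    have htIcc : t ∈ Finset.Icc 1 T := Finset.mem_Icc.mpr ⟨ht1, htT⟩
    obtain ⟨hpos, hsum⟩ := hstruct t ht1 (by omega)
    have hηt := hηpos t
    have hηt1 := hηpos (t-1)
    set β := η t / η (t-1) with hβdef
    have hβ0 : 0 < β := div_pos hηt hηt1
    have hβ1 : β ≤ 1 := (div_le_one hηt1).mpr (hηanti (t-1) t (by omega))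
    have hβη : β * η (t-1) = η t := div_mul_cancel₀ _ hηt1.ne'
    set A := ∑ i, p t i * ℓ t i with hAdef
    have hℓt := hℓ t htIcc
    have hA0 : 0 ≤ A := Finset.sum_nonneg fun i _ => mul_nonneg (hpos i).le (hℓt i).1
    have hA1 : A ≤ 1 := by
      calc A ≤ ∑ i, p t i :=
          Finset.sum_le_sum (fun i _ => mul_le_of_le_one_right (hpos i).le (hℓt i).2)
      _ = 1 := hsum
    set x : Fin d → ℝ := fun i => p t i * Real.exp (-η (t-1) * ℓ t i) with hxdef
    have hxpos : ∀ i, 0 < x i := fun i => mul_pos (hpos i) (Real.exp_pos _)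
    have hxβ : ∀ i, x i ^ β = p t i ^ β * Real.exp (-η t * ℓ t i) := by
      intro i
      rw [hxdef]
      rw [Real.mul_rpow (hpos i).le (Real.exp_pos _).le, ← Real.exp_mul]
      congr 2
      rw [← hβη]; ring
    set Z := ∑ i, p t i ^ β * Real.exp (-η t * ℓ t i) with hZdef
    have hZx : Z = ∑ i, x i ^ β := Finset.sum_congr rfl fun i _ => (hxβ i).symm
    have hZpos : 0 < Z := hZposall t ht1 htT
    set W := ∑ i, x i with hWdef
    have hWpos : 0 < W := Finset.sum_pos (fun i _ => hxpos i) Finset.univ_nonempty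
    have hstep2 : W ≤ 1 - A + A * Real.exp (-η (t-1)) := by
      have hper : ∀ i, Real.exp (-η (t-1) * ℓ t i) ≤ 1 - ℓ t i + ℓ t i * Real.exp (-η (t-1)) := by
        intro i
        have hc := convexOn_exp.2 (Set.mem_univ (0:ℝ)) (Set.mem_univ (-η (t-1)))
          (by linarith [(hℓt i).2] : (0:ℝ) ≤ 1 - ℓ t i) (hℓt i).1 (by ring)
        simp only [smul_eq_mul, mul_zero, zero_add, Real.exp_zero, mul_one] at hc
        have hcomm : ℓ t i * -η (t-1) = -η (t-1) * ℓ t i := mul_comm _ _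
        rw [hcomm] at hc
        linarith
      calc W ≤ ∑ i, p t i * (1 - ℓ t i + ℓ t i * Real.exp (-η (t-1))) :=
          Finset.sum_le_sum fun i _ => mul_le_mul_of_nonneg_left (hper i) (hpos i).le
      _ = (∑ i, p t i) - A + A * Real.exp (-η (t-1)) := by
          rw [hAdef]
          rw [Finset.sum_congr rfl (fun i (_ : i ∈ Finset.univ) =>
            (by ring : p t i * (1 - ℓ t i + ℓ t i * Real.exp (-η (t-1)))
              = p t i - p t i * ℓ t i + (p t i * ℓ t i) * Real.exp (-η (t-1)))),
            Finset.sum_add_distrib, Finset.sum_sub_distrib, ← Finset.sum_mul]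
      _ = 1 - A + A * Real.exp (-η (t-1)) := by rw [hsum]
    have hW2 : W ≤ Real.exp (-η (t-1) * A + η (t-1)^2/8) := by
      have hh := hoeffding A hA0 hA1 (-η (t-1))
      have hNpos := hoeffN A hA0 hA1 (-η (t-1))
      calc W ≤ 1 - A + A * Real.exp (-η (t-1)) := hstep2
      _ = Real.exp (Real.log (1 - A + A * Real.exp (-η (t-1)))) := (Real.exp_log hNpos).symm
      _ ≤ Real.exp (-η (t-1) * A + η (t-1)^2/8) := by
          apply Real.exp_le_exp.mpr
          calc Real.log (1 - A + A * Real.exp (-η (t-1)))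
              ≤ A * (-η (t-1)) + (-η (t-1))^2/8 := hh
          _ = -η (t-1) * A + η (t-1)^2/8 := by ring
    have hZle : Z ≤ (d:ℝ)^((1:ℝ)-β) * Real.exp (β * (-η (t-1) * A + η (t-1)^2/8)) := by
      rw [hZx]
      calc ∑ i, x i ^ β ≤ (d:ℝ)^((1:ℝ)-β) * W^β :=
          jensen_rpow d hd β hβ0 hβ1 x (fun i => (hxpos i).le)
      _ ≤ (d:ℝ)^((1:ℝ)-β) * Real.exp (-η (t-1) * A + η (t-1)^2/8) ^ β := by
          apply mul_le_mul_of_nonneg_left (Real.rpow_le_rpow hWpos.le hW2 hβ0.le) (by positivity)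
      _ = _ := by rw [← Real.exp_mul, mul_comm (-η (t-1) * A + η (t-1)^2/8) β]
    have hvj : v (t+1) j * Z = p t j ^ β * Real.exp (-η t * ℓ t j) := by
      rw [hv t htIcc j]
      exact div_mul_cancel₀ _ hZpos.ne'
    have hvjpos : 0 < v (t+1) j := hvposall t ht1 htT j
    have hlogeq : Real.log (v (t+1) j) + Real.log Z
        = β * Real.log (p t j) + (-η t * ℓ t j) := by
      rw [← Real.log_mul hvjpos.ne' hZpos.ne', hvj,
        Real.log_mul (Real.rpow_pos_of_pos (hpos j) β).ne' (Real.exp_ne_zero _),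
        Real.log_rpow (hpos j), Real.log_exp]
    have hlogZ : Real.log Z ≤ ((1:ℝ)-β) * Real.log d + β * (-η (t-1) * A + η (t-1)^2/8) := by
      calc Real.log Z ≤ Real.log ((d:ℝ)^((1:ℝ)-β) * Real.exp (β * (-η (t-1) * A + η (t-1)^2/8))) :=
          Real.log_le_log hZpos hZle
      _ = _ := by
          rw [Real.log_mul (Real.rpow_pos_of_pos hd0 _).ne' (Real.exp_ne_zero _),
            Real.log_rpow hd0, Real.log_exp]
    have h3 : β * (-η (t-1) * A + η (t-1)^2/8) = -(η t * A) + η t * η (t-1)/8 := by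
      rw [← hβη]; ring
    rw [h3] at hlogZ
    have hkey : η t * (A - ℓ t j) ≤ Real.log (v (t+1) j) - β * Real.log (p t j)
        + ((1:ℝ)-β) * Real.log d + η t * η (t-1)/8 := by linarith
    have hfinal : A - ℓ t j ≤ (Real.log (v (t+1) j) - β * Real.log (p t j)
        + ((1:ℝ)-β) * Real.log d + η t * η (t-1)/8)/η t := by
      rw [le_div_iff₀ hηt, mul_comm]
      exact hkey
    calc A - ℓ t j ≤ _ := hfinal
    _ = η (t-1)/8 + (1/η t - 1/η (t-1)) * Real.log d
        + (1/η t) * Real.log (v (t+1) j) - (1/η (t-1)) * Real.log (p t j) := by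
      rw [hβdef]
      field_simp [hηt.ne', hηt1.ne']
      ring
  -- potential functions and per-step with share update
  set Gd : ℕ → ℝ := fun u => (1/η (u-1)) * Real.log d with hGddef
  set Gp : ℕ → ℝ := fun u => (1/η (u-1)) * Real.log (p u j) with hGpdef
  set cc : ℕ → ℝ := fun u => if u = 1 then (1/η 1) * Real.log d
    else (1/η u) * (Real.log u - Real.log ((u:ℝ)-1)) with hccdef
  have hstepc : ∀ t, 1 ≤ t → t ≤ T →
      (∑ i, p t i * ℓ t i) - ℓ t j ≤
        η (t-1)/8 + (Gd (t+1) - Gd t) + (Gp (t+1) - Gp t) + cc t := by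
    intro t ht1 htT
    have h := hstep t ht1 htT
    have hGd1 : Gd (t+1) = (1/η t) * Real.log d := by simp [hGddef]
    have hGp1 : Gp (t+1) = (1/η t) * Real.log (p (t+1) j) := by simp [hGpdef]
    have hvb : (1/η t) * Real.log (v (t+1) j) ≤ (1/η t) * Real.log (p (t+1) j) + cc t := by
      rcases eq_or_lt_of_le ht1 with h1 | h1
      · have ht1' : t = 1 := h1.symm
        subst ht1'
        have hp2 : p 2 j = 1/(d:ℝ) := by
          have := hshare 1 (Finset.mem_Icc.mpr ⟨le_rfl, by omega⟩) j
          rw [hαdef 1 le_rfl] at this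
          norm_num at this
          rw [this, one_div]
        have hlv : Real.log (v 2 j) ≤ 0 :=
          Real.log_nonpos (hvposall 1 le_rfl (by omega) j).le (hvle1 1 le_rfl (by omega) j)
        have hcc : cc 1 = (1/η 1) * Real.log d := by simp [hccdef]
        have hlp : Real.log (p 2 j) = -Real.log d := by rw [hp2, one_div, Real.log_inv]
        have hη1pos := hηpos 1
        have hmn : (1/η 1) * Real.log (v 2 j) ≤ 0 :=
          mul_nonpos_of_nonneg_of_nonpos (by positivity) hlv
        show (1/η 1) * Real.log (v 2 j) ≤ (1/η 1) * Real.log (p 2 j) + cc 1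
        rw [hcc, hlp]
        have : (1/η 1) * -Real.log ↑d + (1/η 1) * Real.log ↑d = 0 := by ring
        linarith
      · have ht2 : 2 ≤ t := h1
        have htR2 : (2:ℝ) ≤ t := by exact_mod_cast ht2
        have htpos : (0:ℝ) < t := by linarith
        have ht1R : (0:ℝ) < (t:ℝ)-1 := by linarith
        have hppos : 0 < p (t+1) j := (hstruct (t+1) (by omega) (by omega)).1 j
        have hvpos' := hvposall t ht1 htT j
        have hsh := hshare t (Finset.mem_Icc.mpr ⟨ht1, htT⟩) j
        rw [hαdef t ht1] at hsh
        have hfr : (1:ℝ) - 1/t = ((t:ℝ)-1)/t := by field_simp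
        have h2 : ((t:ℝ)-1)/t * v (t+1) j ≤ p (t+1) j := by
          have hαd : (0:ℝ) ≤ 1/(t:ℝ)/d := by positivity
          rw [hsh, ← hfr]
          linarith
        have hvlep : v (t+1) j ≤ p (t+1) j * ((t:ℝ)/((t:ℝ)-1)) := by
          have h3 := mul_le_mul_of_nonneg_left h2
            (le_of_lt (show (0:ℝ) < (t:ℝ)/((t:ℝ)-1) by positivity))
          have he : (t:ℝ)/((t:ℝ)-1) * (((t:ℝ)-1)/t) = 1 := by
            field_simp
          calc v (t+1) j = ((t:ℝ)/((t:ℝ)-1) * (((t:ℝ)-1)/t)) * v (t+1) j := by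
                rw [he, one_mul]
          _ = (t:ℝ)/((t:ℝ)-1) * (((t:ℝ)-1)/t * v (t+1) j) := by ring
          _ ≤ (t:ℝ)/((t:ℝ)-1) * p (t+1) j := h3
          _ = p (t+1) j * ((t:ℝ)/((t:ℝ)-1)) := mul_comm _ _
        have hlogv : Real.log (v (t+1) j)
            ≤ Real.log (p (t+1) j) + (Real.log t - Real.log ((t:ℝ)-1)) := by
          calc Real.log (v (t+1) j) ≤ Real.log (p (t+1) j * ((t:ℝ)/((t:ℝ)-1))) :=
              Real.log_le_log hvpos' hvlep
          _ = _ := by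
              rw [Real.log_mul hppos.ne' (by positivity),
                Real.log_div htpos.ne' ht1R.ne']
        have hcc : cc t = (1/η t) * (Real.log t - Real.log ((t:ℝ)-1)) := by
          have hne : t ≠ 1 := by omega
          simp [hccdef, hne]
        rw [hcc]
        have hinv : (0:ℝ) ≤ 1/η t := le_of_lt (one_div_pos.mpr (hηpos t))
        calc (1/η t) * Real.log (v (t+1) j)
            ≤ (1/η t) * (Real.log (p (t+1) j) + (Real.log t - Real.log ((t:ℝ)-1))) :=
            mul_le_mul_of_nonneg_left hlogv hinv
        _ = (1/η t) * Real.log (p (t+1) j) + (1/η t) * (Real.log t - Real.log ((t:ℝ)-1)) := by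
            ring
    have hGd2 : Gd t = (1/η (t-1)) * Real.log d := rfl
    have hGp2 : Gp t = (1/η (t-1)) * Real.log (p t j) := rfl
    have hexp : (1/η t - 1/η (t-1)) * Real.log d
        = (1/η t) * Real.log d - (1/η (t-1)) * Real.log d := by ring
    rw [hexp] at h
    rw [hGd1, hGp1, hGd2, hGp2]
    linarith
  -- summing up
  have hsum1 : ∑ t ∈ Finset.Icc r s, ((∑ i, p t i * ℓ t i) - ℓ t j)
      ≤ (∑ t ∈ Finset.Icc r s, η (t-1))/8 + (Gd (s+1) - Gd r) + (Gp (s+1) - Gp r)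
        + ∑ t ∈ Finset.Icc r s, cc t := by
    calc ∑ t ∈ Finset.Icc r s, ((∑ i, p t i * ℓ t i) - ℓ t j)
        ≤ ∑ t ∈ Finset.Icc r s, (η (t-1)/8 + (Gd (t+1) - Gd t) + (Gp (t+1) - Gp t) + cc t) :=
        Finset.sum_le_sum (fun t htm => by
          obtain ⟨h1, h2⟩ := Finset.mem_Icc.mp htm
          exact hstepc t (le_trans hr h1) (le_trans h2 hsT))
    _ = _ := by
        rw [Finset.sum_add_distrib, Finset.sum_add_distrib, Finset.sum_add_distrib,
          tele Gd r s hrs, tele Gp r s hrs, ← Finset.sum_div]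
  have hs1 : 1 ≤ s := le_trans hr hrs
  have hsR1 : (1:ℝ) ≤ s := by exact_mod_cast hs1
  have hηs := hηpos s
  -- cc tail bound
  have hcctail : ∀ r' : ℕ, 2 ≤ r' → r' ≤ s+1 →
      ∑ t ∈ Finset.Icc r' s, cc t ≤ (1/η s) * (Real.log s - Real.log ((r':ℝ)-1)) := by
    intro r' h2 hle
    have hr'R : (2:ℝ) ≤ r' := by exact_mod_cast h2
    rcases Nat.lt_or_ge s r' with hlt | hge
    · have hemp : Finset.Icc r' s = ∅ := Finset.Icc_eq_empty (by omega)
      rw [hemp, Finset.sum_empty]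
      have h3 : Real.log ((r':ℝ)-1) ≤ Real.log s := by
        apply Real.log_le_log (by linarith)
        have : (r':ℝ) ≤ (s:ℝ)+1 := by exact_mod_cast hle
        linarith
      exact mul_nonneg (le_of_lt (one_div_pos.mpr hηs)) (by linarith)
    · have hterm : ∀ t ∈ Finset.Icc r' s, cc t ≤
          (fun u : ℕ => (1/η s) * Real.log ((u:ℝ)-1)) (t+1)
            - (fun u : ℕ => (1/η s) * Real.log ((u:ℝ)-1)) t := by
        intro t htm
        obtain ⟨ha, hb⟩ := Finset.mem_Icc.mp htm
        have ht2 : 2 ≤ t := le_trans h2 ha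
        have htR2 : (2:ℝ) ≤ t := by exact_mod_cast ht2
        have hne : t ≠ 1 := by omega
        have hcc : cc t = (1/η t) * (Real.log t - Real.log ((t:ℝ)-1)) := by
          simp [hccdef, hne]
        have hcast : ((t+1:ℕ):ℝ) - 1 = (t:ℝ) := by push_cast; ring
        simp only [hcast]
        rw [hcc]
        have hΔ0 : 0 ≤ Real.log t - Real.log ((t:ℝ)-1) := by
          have := Real.log_le_log (show (0:ℝ) < (t:ℝ)-1 by linarith)
            (show (t:ℝ)-1 ≤ t by linarith)
          linarith
        have hmul := mul_le_mul_of_nonneg_right (hηinv t s hb) hΔ0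
        calc (1/η t) * (Real.log t - Real.log ((t:ℝ)-1))
            ≤ (1/η s) * (Real.log t - Real.log ((t:ℝ)-1)) := hmul
        _ = (1/η s) * Real.log t - (1/η s) * Real.log ((t:ℝ)-1) := by ring
      calc ∑ t ∈ Finset.Icc r' s, cc t
          ≤ ∑ t ∈ Finset.Icc r' s, ((fun u : ℕ => (1/η s) * Real.log ((u:ℝ)-1)) (t+1)
              - (fun u : ℕ => (1/η s) * Real.log ((u:ℝ)-1)) t) := Finset.sum_le_sum hterm
      _ = (1/η s) * Real.log (((s+1:ℕ):ℝ)-1) - (1/η s) * Real.log ((r':ℝ)-1) :=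
          tele (fun u : ℕ => (1/η s) * Real.log ((u:ℝ)-1)) r' s hge
      _ = (1/η s) * (Real.log s - Real.log ((r':ℝ)-1)) := by
          have hcast : ((s+1:ℕ):ℝ) - 1 = (s:ℝ) := by push_cast; ring
          rw [hcast]; ring
  -- numeric: Gp (s+1) ≤ 0 and Gd values
  have hGps1 : Gp (s+1) ≤ 0 := by
    have hp0 : 0 < p (s+1) j := (hstruct (s+1) (by omega) (by omega)).1 j
    have hp1' : p (s+1) j ≤ 1 := hple1 (s+1) (by omega) (by omega) j
    have hlg := Real.log_nonpos hp0.le hp1'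
    have : Gp (s+1) = (1/η s) * Real.log (p (s+1) j) := by simp [hGpdef]
    rw [this]
    exact mul_nonpos_of_nonneg_of_nonpos (le_of_lt (one_div_pos.mpr hηs)) hlg
  have hGds1 : Gd (s+1) = (1/η s) * Real.log d := by simp [hGddef]
  -- numeric bounds
  have hYX : Real.sqrt (3 * Real.log (3*(d:ℝ))) ≤ Real.sqrt ((T:ℝ) * Real.log ((d:ℝ)*T)) := by
    apply Real.sqrt_le_sqrt
    nlinarith
  have hN1 : (1/η s) * Real.log ((d:ℝ)*s) ≤ Real.sqrt ((T:ℝ) * Real.log ((d:ℝ)*T)) := by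
    rcases le_or_gt 3 s with h3 | h3
    · have ha1 : 1 < Real.log ((d:ℝ)*s) := hlogdt s h3
      have hsR : (0:ℝ) < s := by linarith
      rw [hηdef s h3, one_div, inv_mul_eq_div]
      calc Real.log ((d:ℝ)*s) / Real.sqrt (Real.log ((d:ℝ)*s)/s)
          ≤ Real.sqrt ((s:ℝ) * Real.log ((d:ℝ)*s)) :=
          div_sqrt_div_le _ _ _ (by linarith) (by linarith) le_rfl hsR
      _ ≤ Real.sqrt ((T:ℝ) * Real.log ((d:ℝ)*T)) := by
          apply Real.sqrt_le_sqrt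
          have hsT' : (s:ℝ) ≤ T := by exact_mod_cast hsT
          have hlel : Real.log ((d:ℝ)*s) ≤ Real.log ((d:ℝ)*T) :=
            Real.log_le_log (by positivity) (by nlinarith)
          nlinarith
    · have hs2 : s ≤ 2 := by omega
      have hs2R : (s:ℝ) ≤ 2 := by exact_mod_cast hs2
      have hηs3 : η s = η 3 := by
        interval_cases s
        · exact hη1
        · exact hη2
      rw [hηs3, hη3eq, one_div, inv_mul_eq_div]
      have hds : Real.log ((d:ℝ)*s) ≤ Real.log (3*(d:ℝ)) :=
        Real.log_le_log (by nlinarith) (by nlinarith)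
      have h0ds : 0 ≤ Real.log ((d:ℝ)*s) := Real.log_nonneg (by nlinarith)
      calc Real.log ((d:ℝ)*s)/Real.sqrt (Real.log (3*(d:ℝ))/3)
          ≤ Real.sqrt (3*Real.log (3*(d:ℝ))) :=
          div_sqrt_div_le _ _ _ (by linarith) h0ds hds (by norm_num)
      _ ≤ _ := hYX
  have hN2 : (1/η 1) * Real.log d ≤ Real.sqrt (3 * Real.log (3*(d:ℝ))) := by
    rw [hη1, hη3eq, one_div, inv_mul_eq_div]
    apply div_sqrt_div_le _ _ _ (by linarith) hlogd0 _ (by norm_num)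
    apply Real.log_le_log hd0 (by nlinarith)
  have hN3 : ∑ t ∈ Finset.Icc r s, η (t-1)
      ≤ Real.sqrt (Real.log ((d:ℝ)*T)/3) + 2*Real.sqrt ((T:ℝ)*Real.log ((d:ℝ)*T)) := by
    have hLpos : (0:ℝ) < Real.log ((d:ℝ)*T) := by linarith
    have h1 : ∑ t ∈ Finset.Icc r s, η (t-1) ≤ ∑ t ∈ Finset.Icc 1 T, η (t-1) :=
      Finset.sum_le_sum_of_subset_of_nonneg (Finset.Icc_subset_Icc hr hsT)
        (fun t _ _ => (hηpos (t-1)).le)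
    have hsplit : ∑ t ∈ Finset.Icc 1 T, η (t-1) = η 0 + ∑ t ∈ Finset.Icc 2 T, η (t-1) := by
      have e1 : Finset.Icc 1 T = Finset.Ioc 0 T := by rw [← Finset.Icc_add_one_left_eq_Ioc]; rfl
      have e2 : Finset.Icc 2 T = Finset.Ioc 1 T := by rw [← Finset.Icc_add_one_left_eq_Ioc]; rfl
      have e3 : Finset.Ioc 0 1 = {1} := by rw [← Finset.Icc_add_one_left_eq_Ioc, zero_add, Finset.Icc_self]
      have h01 := Finset.sum_Ioc_consecutive (fun t => η (t-1))
        (show (0:ℕ) ≤ 1 by omega) (show (1:ℕ) ≤ T by omega)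
      rw [e1, e2, ← h01, e3, Finset.sum_singleton]
    have hη0b : η 0 ≤ Real.sqrt (Real.log ((d:ℝ)*T)/3) := by
      rw [hη0, hη3eq]
      exact Real.sqrt_le_sqrt (by linarith)
    have htail : ∑ t ∈ Finset.Icc 2 T, η (t-1)
        ≤ 2*Real.sqrt ((T:ℝ)*Real.log ((d:ℝ)*T)) := by
      have hterm : ∀ t ∈ Finset.Icc 2 T, η (t-1) ≤
          (fun u : ℕ => 2*Real.sqrt (Real.log ((d:ℝ)*T)) * Real.sqrt ((u:ℝ)-2)) (t+1)
            - (fun u : ℕ => 2*Real.sqrt (Real.log ((d:ℝ)*T)) * Real.sqrt ((u:ℝ)-2)) t := by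
        intro t htm
        obtain ⟨h2t, htT'⟩ := Finset.mem_Icc.mp htm
        have htR2 : (2:ℝ) ≤ t := by exact_mod_cast h2t
        have htTR : (t:ℝ) ≤ T := by exact_mod_cast htT'
        have hu : η (t-1) ≤ Real.sqrt (Real.log ((d:ℝ)*T) / ((t:ℝ)-1)) := by
          rcases le_or_gt 4 t with h4 | h4
          · have h31 : 3 ≤ t - 1 := by omega
            have hc : ((t-1:ℕ):ℝ) = (t:ℝ)-1 := by
              rw [Nat.cast_sub (by omega : 1 ≤ t)]; norm_num
            rw [hηdef (t-1) h31, hc]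
            apply Real.sqrt_le_sqrt
            have hnum : Real.log ((d:ℝ)*((t:ℝ)-1)) ≤ Real.log ((d:ℝ)*T) :=
              Real.log_le_log (by nlinarith) (by nlinarith)
            rw [div_le_div_iff_of_pos_right (by linarith : (0:ℝ) < (t:ℝ)-1)]
            exact hnum
          · have ht1eq : η (t-1) = η 3 := by
              interval_cases t
              · exact hη1
              · exact hη2
            rw [ht1eq, hη3eq]
            apply Real.sqrt_le_sqrt
            have h3t : (t:ℝ)-1 ≤ 3 := by
              have : (t:ℝ) ≤ 4 := by exact_mod_cast (by omega : t ≤ 4)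
              linarith
            calc Real.log (3*(d:ℝ))/3 ≤ Real.log ((d:ℝ)*T)/3 := by linarith
            _ ≤ Real.log ((d:ℝ)*T)/((t:ℝ)-1) := by
                rw [div_le_div_iff₀ (by norm_num) (by linarith)]
                nlinarith
        have hc1 : ((t+1:ℕ):ℝ) - 2 = (t:ℝ)-1 := by push_cast; ring
        simp only [hc1]
        set su := Real.sqrt ((t:ℝ)-1) with hsu
        set su1 := Real.sqrt ((t:ℝ)-2) with hsu1
        have hsu2 : su^2 = (t:ℝ)-1 := Real.sq_sqrt (by linarith)
        have hsu12 : su1^2 = (t:ℝ)-2 := Real.sq_sqrt (by linarith)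
        have hsupos : (1:ℝ) ≤ su := by
          rw [hsu]
          have h := Real.sqrt_le_sqrt (show (1:ℝ) ≤ (t:ℝ)-1 by linarith)
          rwa [Real.sqrt_one] at h
        have hsu10 : 0 ≤ su1 := Real.sqrt_nonneg _
        have hkey2 : 1/su ≤ 2*(su - su1) := by
          rw [div_le_iff₀ (by linarith : (0:ℝ) < su)]
          nlinarith [sq_nonneg (su - su1)]
        have hrw : Real.sqrt (Real.log ((d:ℝ)*T)/((t:ℝ)-1))
            = Real.sqrt (Real.log ((d:ℝ)*T)) * (1/su) := by
          rw [Real.sqrt_div hLpos.le, hsu, one_div, div_eq_mul_inv]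
        calc η (t-1) ≤ Real.sqrt (Real.log ((d:ℝ)*T)/((t:ℝ)-1)) := hu
        _ = Real.sqrt (Real.log ((d:ℝ)*T)) * (1/su) := hrw
        _ ≤ Real.sqrt (Real.log ((d:ℝ)*T)) * (2*(su-su1)) :=
            mul_le_mul_of_nonneg_left hkey2 (Real.sqrt_nonneg _)
        _ = 2*Real.sqrt (Real.log ((d:ℝ)*T)) * su - 2*Real.sqrt (Real.log ((d:ℝ)*T)) * su1 := by
            ring
      calc ∑ t ∈ Finset.Icc 2 T, η (t-1)
          ≤ ∑ t ∈ Finset.Icc 2 T,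
            ((fun u : ℕ => 2*Real.sqrt (Real.log ((d:ℝ)*T)) * Real.sqrt ((u:ℝ)-2)) (t+1)
              - (fun u : ℕ => 2*Real.sqrt (Real.log ((d:ℝ)*T)) * Real.sqrt ((u:ℝ)-2)) t) :=
          Finset.sum_le_sum hterm
      _ = 2*Real.sqrt (Real.log ((d:ℝ)*T)) * Real.sqrt (((T+1:ℕ):ℝ)-2)
            - 2*Real.sqrt (Real.log ((d:ℝ)*T)) * Real.sqrt (((2:ℕ):ℝ)-2) :=
          tele (fun u : ℕ => 2*Real.sqrt (Real.log ((d:ℝ)*T)) * Real.sqrt ((u:ℝ)-2)) 2 T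
            (by omega)
      _ ≤ 2*Real.sqrt ((T:ℝ)*Real.log ((d:ℝ)*T)) := by
          have hc2 : ((T+1:ℕ):ℝ)-2 = (T:ℝ)-1 := by push_cast; ring
          have hc3 : ((2:ℕ):ℝ)-2 = 0 := by norm_num
          rw [hc2, hc3, Real.sqrt_zero, mul_zero, sub_zero]
          have hst : Real.sqrt ((T:ℝ)-1) ≤ Real.sqrt T := Real.sqrt_le_sqrt (by linarith)
          calc 2*Real.sqrt (Real.log ((d:ℝ)*T)) * Real.sqrt ((T:ℝ)-1)
              ≤ 2*Real.sqrt (Real.log ((d:ℝ)*T)) * Real.sqrt T :=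
              mul_le_mul_of_nonneg_left hst (by positivity)
          _ = 2*Real.sqrt ((T:ℝ)*Real.log ((d:ℝ)*T)) := by
              rw [Real.sqrt_mul (by linarith : (0:ℝ) ≤ (T:ℝ))]
              ring
    linarith
  have hspos : (0:ℝ) < s := by linarith
  have hlogds : Real.log ((d:ℝ)*s) = Real.log d + Real.log s :=
    Real.log_mul hd0.ne' hspos.ne'
  have hmid : (Gd (s+1) - Gd r) + (Gp (s+1) - Gp r) + ∑ t ∈ Finset.Icc r s, cc t
      ≤ (1/η s) * Real.log ((d:ℝ)*s) + Real.sqrt (3*Real.log (3*(d:ℝ))) := by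
    rcases eq_or_lt_of_le hr with hr1 | hr2
    · have hr1' : r = 1 := hr1.symm
      subst hr1'
      have hccsplit : ∑ t ∈ Finset.Icc 1 s, cc t = cc 1 + ∑ t ∈ Finset.Icc 2 s, cc t := by
        have e1 : Finset.Icc 1 s = Finset.Ioc 0 s := by rw [← Finset.Icc_add_one_left_eq_Ioc]; rfl
        have e2 : Finset.Icc 2 s = Finset.Ioc 1 s := by rw [← Finset.Icc_add_one_left_eq_Ioc]; rfl
        have e3 : Finset.Ioc 0 1 = {1} := by rw [← Finset.Icc_add_one_left_eq_Ioc, zero_add, Finset.Icc_self]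
        have h01 := Finset.sum_Ioc_consecutive cc
          (show (0:ℕ) ≤ 1 by omega) (show (1:ℕ) ≤ s by omega)
        rw [e1, e2, ← h01, e3, Finset.sum_singleton]
      have hcc1 : cc 1 = (1/η 1) * Real.log d := by simp [hccdef]
      have htail2 : ∑ t ∈ Finset.Icc 2 s, cc t ≤ (1/η s) * Real.log s := by
        have h := hcctail 2 le_rfl (by omega)
        have h2c : ((2:ℕ):ℝ) - 1 = 1 := by norm_num
        rw [h2c, Real.log_one] at h
        linarith
      have hGd1v : Gd 1 = (1/η 0) * Real.log d := rfl
      have hGp1v : Gp 1 = (1/η 0) * -Real.log d := by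
        show (1/η (1-1)) * Real.log (p 1 j) = _
        rw [hp1 j, one_div ((d:ℝ)), Real.log_inv]
      rw [hccsplit, hcc1, hGds1, hGd1v, hGp1v, hlogds]
      linarith [hGps1, htail2, hN2]
    · have hccb := hcctail r hr2 (by omega)
      have hrR2 : (2:ℝ) ≤ r := by exact_mod_cast hr2
      have hr1pos : (0:ℝ) < (r:ℝ)-1 := by linarith
      have hGdrv : Gd r = (1/η (r-1)) * Real.log d := rfl
      have hGprv : Gp r = (1/η (r-1)) * Real.log (p r j) := rfl
      have hlowr := hplow (r-1) (by omega) (by omega) j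
      have hrc : ((r-1:ℕ):ℝ) = (r:ℝ)-1 := by
        rw [Nat.cast_sub (by omega : 1 ≤ r)]; norm_num
      have hreq : (r-1)+1 = r := by omega
      rw [hreq, hrc] at hlowr
      have hppos : 0 < p r j := (hstruct r hr (by omega)).1 j
      have hlogp : -Real.log (p r j) ≤ Real.log ((r:ℝ)-1) + Real.log d := by
        have h1 : Real.log (1/(((r:ℝ)-1)*d)) ≤ Real.log (p r j) :=
          Real.log_le_log (one_div_pos.mpr (mul_pos hr1pos hd0)) hlowr
        rw [one_div, Real.log_inv, Real.log_mul hr1pos.ne' hd0.ne'] at h1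
        linarith
      have hlogr1 : 0 ≤ Real.log ((r:ℝ)-1) := Real.log_nonneg (by linarith)
      have hmono2 : 1/η (r-1) ≤ 1/η s := hηinv (r-1) s (by omega)
      have hinv0 : 0 ≤ 1/η (r-1) := le_of_lt (one_div_pos.mpr (hηpos (r-1)))
      have hgp : -(Gp r) ≤ (1/η (r-1)) * (Real.log ((r:ℝ)-1) + Real.log d) := by
        rw [hGprv]
        have h2 := mul_le_mul_of_nonneg_left hlogp hinv0
        calc -((1/η (r-1)) * Real.log (p r j))
            = (1/η (r-1)) * (-Real.log (p r j)) := by ring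
        _ ≤ _ := h2
      have hcross : Real.log ((r:ℝ)-1) * (1/η (r-1)) ≤ Real.log ((r:ℝ)-1) * (1/η s) :=
        mul_le_mul_of_nonneg_left hmono2 hlogr1
      have hY0 : 0 ≤ Real.sqrt (3*Real.log (3*(d:ℝ))) := Real.sqrt_nonneg _
      rw [hGds1, hGdrv, hlogds]
      linarith [hGps1, hgp, hccb, hcross, hY0]
  -- final numeric combination
  have hXnn : 0 ≤ Real.sqrt ((T:ℝ)*Real.log ((d:ℝ)*T)) := Real.sqrt_nonneg _
  have hsqrt2 : Real.sqrt (2*(T:ℝ)*Real.log ((d:ℝ)*T))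
      = Real.sqrt 2 * Real.sqrt ((T:ℝ)*Real.log ((d:ℝ)*T)) := by
    rw [mul_assoc, Real.sqrt_mul (by norm_num : (0:ℝ) ≤ 2)]
  have hN4 : Real.sqrt (Real.log ((d:ℝ)*T)/3) ≤ Real.sqrt ((T:ℝ)*Real.log ((d:ℝ)*T))/3 := by
    have h9 : (3:ℝ)*Real.sqrt (Real.log ((d:ℝ)*T)/3)
        = Real.sqrt (9*(Real.log ((d:ℝ)*T)/3)) := by
      rw [Real.sqrt_mul (by norm_num : (0:ℝ) ≤ 9),
        show Real.sqrt 9 = 3 by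
          rw [show (9:ℝ) = 3^2 by norm_num, Real.sqrt_sq (by norm_num : (0:ℝ) ≤ 3)]]
    have h10 : (9:ℝ)*(Real.log ((d:ℝ)*T)/3) = 3*Real.log ((d:ℝ)*T) := by ring
    rw [h10] at h9
    have h11 : Real.sqrt (3*Real.log ((d:ℝ)*T)) ≤ Real.sqrt ((T:ℝ)*Real.log ((d:ℝ)*T)) :=
      Real.sqrt_le_sqrt (by nlinarith)
    linarith
  have h31 : (31/24:ℝ) ≤ Real.sqrt 2 := by
    have h1 : ((31:ℝ)/24)^2 ≤ 2 := by norm_num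
    have h2 := Real.sqrt_le_sqrt h1
    rwa [Real.sqrt_sq (by norm_num : (0:ℝ) ≤ 31/24)] at h2
  have hfin2 : (31/24:ℝ)*Real.sqrt ((T:ℝ)*Real.log ((d:ℝ)*T))
      ≤ Real.sqrt 2 * Real.sqrt ((T:ℝ)*Real.log ((d:ℝ)*T)) :=
    mul_le_mul_of_nonneg_right h31 hXnn
  linarith [hsum1, hmid, hN1, hN3, hN4, hfin2]
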